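/- Let S ⊆ ℝ be a set that is locally finite (every bounded interval contains only finitely many points of S), has at least two elements, and is stable under the reflection x ↦ 2a − x for every a ∈ S. If ℓ ∈ ℝ satisfies ℓ·s ∈ S for every s ∈ S, then ℓ is an integer. -/

import Mathlib

/-- Let `S ⊆ ℝ` be a set that is locally finite (every bounded closed interval contains
only finitely many points of `S`), has at least two elements, and is stable under the
reflection `x ↦ 2a − x` for every `a ∈ S`.  If `ℓ ∈ ℝ` satisfies `ℓ·s ∈ S` for every
`s ∈ S`, then `ℓ` is an integer. -/
theorem reflection_stable_locally_finite_scaling_integer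
    (S : Set ℝ)
    (hloc : ∀ a b : ℝ, (S ∩ Set.Icc a b).Finite)
    (htwo : ∃ x ∈ S, ∃ y ∈ S, x ≠ y)
    (hrefl : ∀ a ∈ S, ∀ x ∈ S, 2 * a - x ∈ S)
    (ℓ : ℝ) (hscale : ∀ s ∈ S, ℓ * s ∈ S) :
    ∃ n : ℤ, ℓ = (n : ℝ) := by
  by_contra hcon
  push_neg at hcon
  obtain ⟨x, hx, y, hy, hxy⟩ := htwo
  set d := y - x with hd
  have hd0 : d ≠ 0 := sub_ne_zero.mpr (Ne.symm hxy)
  -- Step A: adding twice a difference of two points of `S` preserves membership.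
  have stepA : ∀ s ∈ S, ∀ t ∈ S, ∀ u ∈ S, u + 2 * (s - t) ∈ S := by
    intro s hs t ht u hu
    have h1 : 2 * t - u ∈ S := hrefl t ht u hu
    have h2 : 2 * s - (2 * t - u) ∈ S := hrefl s hs _ h1
    have : u + 2 * (s - t) = 2 * s - (2 * t - u) := by ring
    rw [this]; exact h2
  -- Powers of ℓ act on points of S.
  have hpow : ∀ k : ℕ, ℓ ^ k * x ∈ S ∧ ℓ ^ k * y ∈ S := by
    intro k
    induction k with
    | zero => simpa using ⟨hx, hy⟩
    | succ k ih =>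
      constructor
      · have h := hscale _ ih.1
        have : ℓ ^ (k + 1) * x = ℓ * (ℓ ^ k * x) := by ring
        rw [this]; exact h
      · have h := hscale _ ih.2
        have : ℓ ^ (k + 1) * y = ℓ * (ℓ ^ k * y) := by ring
        rw [this]; exact h
  -- The set of admissible multipliers.
  set M : Set ℝ := {c | ∀ u ∈ S, u + 2 * d * c ∈ S} with hM
  have hMzero : (0 : ℝ) ∈ M := by intro u hu; simpa using hu
  have hMadd : ∀ c1 ∈ M, ∀ c2 ∈ M, c1 + c2 ∈ M := by
    intro c1 h1 c2 h2 u hu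
    have h := h2 _ (h1 u hu)
    have : u + 2 * d * (c1 + c2) = u + 2 * d * c1 + 2 * d * c2 := by ring
    rw [this]; exact h
  have hMneg : ∀ c ∈ M, -c ∈ M := by
    intro c hc u hu
    have h1 : u + 2 * d * c ∈ S := hc u hu
    have h2 : 2 * u - (u + 2 * d * c) ∈ S := hrefl u hu _ h1
    have : u + 2 * d * (-c) = 2 * u - (u + 2 * d * c) := by ring
    rw [this]; exact h2
  have hMzsmul : ∀ z : ℤ, ∀ c ∈ M, (z : ℝ) * c ∈ M := by
    intro z
    induction z using Int.induction_on with
    | zero => intro c hc; simpa using hMzero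
    | succ k ih =>
      intro c hc
      have h := hMadd _ (ih c hc) _ hc
      have heq : (((k : ℤ) + 1 : ℤ) : ℝ) * c = ((k : ℤ) : ℝ) * c + c := by push_cast; ring
      rw [heq]; exact h
    | pred k ih =>
      intro c hc
      have h := hMadd _ (ih c hc) _ (hMneg c hc)
      have heq : ((-(k : ℤ) - 1 : ℤ) : ℝ) * c = ((-(k : ℤ) : ℤ) : ℝ) * c + -c := by push_cast; ring
      rw [heq]; exact h
  have hMpow : ∀ k : ℕ, ℓ ^ k ∈ M := by
    intro k u hu
    have h := stepA _ (hpow k).2 _ (hpow k).1 u hu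
    have : u + 2 * d * ℓ ^ k = u + 2 * (ℓ ^ k * y - ℓ ^ k * x) := by rw [hd]; ring
    rw [this]; exact h
  have hMsum : ∀ (T : Finset ℕ) (f : ℕ → ℝ), (∀ i ∈ T, f i ∈ M) → (∑ i ∈ T, f i) ∈ M := by
    intro T
    induction T using Finset.induction with
    | empty => intro f _; simpa using hMzero
    | insert _ _ hnot ih =>
      intro f hf
      rw [Finset.sum_insert hnot]
      exact hMadd _ (hf _ (Finset.mem_insert_self _ _)) _
        (ih f fun i hi => hf i (Finset.mem_insert_of_mem hi))
  -- The fractional part ε of ℓ.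
  set n : ℤ := ⌊ℓ⌋ with hn
  set ε : ℝ := ℓ - n with hε
  have hε0 : 0 < ε := by
    have : ε = Int.fract ℓ := by rw [hε, Int.fract, hn]
    rw [this]
    rw [Int.fract_pos]
    intro h
    exact hcon ⌊ℓ⌋ h
  have hε1 : ε < 1 := by
    have : ε = Int.fract ℓ := by rw [hε, Int.fract, hn]
    rw [this]; exact Int.fract_lt_one ℓ
  -- All powers of ε lie in M, by the binomial theorem.
  have hMε : ∀ k : ℕ, ε ^ k ∈ M := by
    intro k
    rw [hε, sub_pow]
    apply hMsum
    intro m hm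
    have heq : (-1 : ℝ) ^ (m + k) * ℓ ^ m * (n : ℝ) ^ (k - m) * (k.choose m : ℝ)
        = (((-1 : ℤ) ^ (m + k) * n ^ (k - m) * (k.choose m : ℤ) : ℤ) : ℝ) * ℓ ^ m := by
      push_cast; ring
    rw [heq]
    exact hMzsmul _ _ (hMpow m)
  -- Hence S contains the injective family x + 2dε^k, contradicting local finiteness.
  have hkey : ∀ k : ℕ, x + 2 * d * ε ^ k ∈ S := fun k => hMε k x hx
  have hinj : Function.Injective (fun k : ℕ => x + 2 * d * ε ^ k) := by
    intro a b hab
    have hab' : x + 2 * d * ε ^ a = x + 2 * d * ε ^ b := hab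
    have h2d : (2 * d : ℝ) ≠ 0 := mul_ne_zero two_ne_zero hd0
    have hεab : ε ^ a = ε ^ b := mul_left_cancel₀ h2d (by linarith)
    exact (pow_right_strictAnti₀ hε0 hε1).injective hεab
  have hmem : ∀ k : ℕ, (fun k : ℕ => x + 2 * d * ε ^ k) k ∈ S ∩ Set.Icc (x - 2 * |d|) (x + 2 * |d|) := by
    intro k
    refine ⟨hkey k, ?_, ?_⟩
    · have h1 : |2 * d * ε ^ k| ≤ 2 * |d| := by
        rw [abs_mul, abs_mul, abs_two]
        have hεk : |ε ^ k| ≤ 1 := by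
          rw [abs_pow, abs_of_pos hε0]
          exact pow_le_one₀ hε0.le hε1.le
        nlinarith [abs_nonneg d, abs_nonneg (ε ^ k)]
      have := neg_abs_le (2 * d * ε ^ k)
      simp only []
      linarith
    · have h1 : |2 * d * ε ^ k| ≤ 2 * |d| := by
        rw [abs_mul, abs_mul, abs_two]
        have hεk : |ε ^ k| ≤ 1 := by
          rw [abs_pow, abs_of_pos hε0]
          exact pow_le_one₀ hε0.le hε1.le
        nlinarith [abs_nonneg d, abs_nonneg (ε ^ k)]
      have := le_abs_self (2 * d * ε ^ k)
      simp only []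
      linarith
  exact (hloc (x - 2 * |d|) (x + 2 * |d|)).not_infinite
    (Set.infinite_of_injective_forall_mem hinj hmem)
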